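/- Let H > 0 be a real number, and for a nonzero integer m set a(m) = −m·(e^{mH} + e^{−mH})/(e^{mH} − e^{−mH}). Then for every nonzero integer k there exists an integer n with n ≠ 0 and n ≠ k such that a(n)·(−k²/2 + 3kn/2 − n²) − a(k−n)·(−n² + nk/2) ≠ 0. -/

import Mathlib

/-- For `H > 0` and `a(m) = −m (e^{mH} + e^{−mH})/(e^{mH} − e^{−mH})`, for every
nonzero integer `k` there exists `n` with `n ≠ 0`, `n ≠ k` such that
`a(n)(−k²/2 + 3kn/2 − n²) − a(k−n)(−n² + nk/2) ≠ 0`. -/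
theorem cylinder_coefficient_nonvanishing (H : ℝ) (hH : 0 < H) (a : ℤ → ℝ)
    (ha : ∀ m : ℤ, m ≠ 0 →
      a m = -(m : ℝ) * (Real.exp ((m : ℝ) * H) + Real.exp (-((m : ℝ) * H)))
        / (Real.exp ((m : ℝ) * H) - Real.exp (-((m : ℝ) * H)))) :
    ∀ k : ℤ, k ≠ 0 → ∃ n : ℤ, n ≠ 0 ∧ n ≠ k ∧
      a n * (-(k : ℝ) ^ 2 / 2 + 3 * k * n / 2 - (n : ℝ) ^ 2)
        - a (k - n) * (-(n : ℝ) ^ 2 + n * k / 2) ≠ 0 := by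
  intro k hk
  refine ⟨2 * k, by omega, by omega, ?_⟩
  have hk2 : (2 * k : ℤ) ≠ 0 := by omega
  have hkn : (k - 2 * k : ℤ) ≠ 0 := by omega
  rw [ha _ hk2, ha _ hkn]
  have hxne : (k : ℝ) * H ≠ 0 :=
    mul_ne_zero (Int.cast_ne_zero.mpr hk) hH.ne'
  set x := (k : ℝ) * H with hx
  have h2x : ((2 * k : ℤ) : ℝ) * H = 2 * x := by rw [hx]; push_cast; ring
  have hmx : ((k - 2 * k : ℤ) : ℝ) * H = -x := by rw [hx]; push_cast; ring
  rw [h2x, hmx]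
  set E := Real.exp x with hE
  have hEpos : 0 < E := Real.exp_pos x
  have hE0 : E ≠ 0 := hEpos.ne'
  have hE1 : E ≠ 1 := by
    rw [hE, Ne, Real.exp_eq_one_iff]; exact hxne
  have hE4 : E ^ 4 - 1 ≠ 0 := by
    rcases lt_trichotomy E 1 with h | h | h
    · have := pow_lt_one₀ hEpos.le h (by norm_num : (4:ℕ) ≠ 0)
      nlinarith
    · exact absurd h hE1
    · have := one_lt_pow₀ h (by norm_num : (4:ℕ) ≠ 0)
      nlinarith
  have e1 : Real.exp (2 * x) = E ^ 2 := by
    rw [two_mul, Real.exp_add, hE]; ring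
  have e2 : Real.exp (-(2 * x)) = (E ^ 2)⁻¹ := by
    rw [Real.exp_neg, e1]
  have e3 : Real.exp (-x) = E⁻¹ := by rw [Real.exp_neg, hE]
  have e4 : Real.exp (-(-x)) = E := by rw [neg_neg, hE]
  rw [e1, e2, e3, e4]
  have hd1 : E ^ 2 - (E ^ 2)⁻¹ ≠ 0 := by
    intro h
    apply hE4
    have h2 : (E ^ 2 - (E ^ 2)⁻¹) * E ^ 2 = 0 := by rw [h]; ring
    field_simp at h2
    nlinarith [h2]
  have hd2 : E⁻¹ - E ≠ 0 := by
    intro h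
    apply hE4
    have h2 : (E⁻¹ - E) * E = 0 := by rw [h]; ring
    field_simp at h2
    nlinarith [h2]
  have hgoal : -(((2 * k : ℤ) : ℝ)) * (E ^ 2 + (E ^ 2)⁻¹) / (E ^ 2 - (E ^ 2)⁻¹) *
        (-(k : ℝ) ^ 2 / 2 + 3 * k * ((2 * k : ℤ) : ℝ) / 2 - ((2 * k : ℤ) : ℝ) ^ 2) -
      -(((k - 2 * k : ℤ) : ℝ)) * (E⁻¹ + E) / (E⁻¹ - E) *
        (-((2 * k : ℤ) : ℝ) ^ 2 + ((2 * k : ℤ) : ℝ) * k / 2)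
      = -6 * (k : ℝ) ^ 3 * E ^ 2 / (E ^ 4 - 1) := by
    push_cast
    have h21 : E ^ 2 - 1 ≠ 0 := by
      rcases lt_trichotomy E 1 with h | h | h
      · have := pow_lt_one₀ hEpos.le h (by norm_num : (2:ℕ) ≠ 0)
        nlinarith
      · exact absurd h hE1
      · have := one_lt_pow₀ h (by norm_num : (2:ℕ) ≠ 0)
        nlinarith
    have h21' : (1:ℝ) - E ^ 2 ≠ 0 := fun h => h21 (by linarith)
    have d1 : E ^ 2 - (E ^ 2)⁻¹ = (E ^ 4 - 1) / E ^ 2 := by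
      field_simp
    have d2 : E⁻¹ - E = (1 - E ^ 2) / E := by
      field_simp
    rw [eq_div_iff hE4, d1, d2]
    field_simp
    ring
  rw [hgoal]
  apply div_ne_zero _ hE4
  have hkR : (k : ℝ) ≠ 0 := Int.cast_ne_zero.mpr hk
  positivity
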